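/- Let q ∈ ℝ be fixed and f : (0,1] → ℝ satisfy f(xy) + f((1-x)y) - f(y) = (f(x) + f(1-x))·y^q for all x ∈ (0,1), y ∈ (0,1]. Then the function G(u,v) = f(u) + f(v) - f(u+v), defined on D₂ = {(u,v) : u,v,u+v ∈ (0,1)}, is symmetric, satisfies the cocycle equation G(x,y) + G(x+y,z) = G(y,z) + G(x,y+z) on D₃, and is q-homogeneous: G(tu,tv) = t^q·G(u,v) for all t ∈ (0,1) and (u,v) ∈ D₂. -/

import Mathlib

theorem stmt_1 (q : ℝ) (f : ℝ → ℝ)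
    (hf : ∀ x ∈ Set.Ioo (0:ℝ) 1, ∀ y ∈ Set.Ioc (0:ℝ) 1,
      f (x * y) + f ((1 - x) * y) - f y = (f x + f (1 - x)) * y ^ q)
    (G : ℝ → ℝ → ℝ) (hG : ∀ u v, G u v = f u + f v - f (u + v)) :
    (∀ u v, u ∈ Set.Ioo (0:ℝ) 1 → v ∈ Set.Ioo (0:ℝ) 1 → u + v ∈ Set.Ioo (0:ℝ) 1 →
      G u v = G v u) ∧
    (∀ x y z, x ∈ Set.Ioo (0:ℝ) 1 → y ∈ Set.Ioo (0:ℝ) 1 → z ∈ Set.Ioo (0:ℝ) 1 →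
      x + y + z ∈ Set.Ioo (0:ℝ) 1 →
      G x y + G (x + y) z = G y z + G x (y + z)) ∧
    (∀ t ∈ Set.Ioo (0:ℝ) 1, ∀ u v, u ∈ Set.Ioo (0:ℝ) 1 → v ∈ Set.Ioo (0:ℝ) 1 →
      u + v ∈ Set.Ioo (0:ℝ) 1 → G (t * u) (t * v) = t ^ q * G u v) := by
  refine ⟨?_, ?_, ?_⟩
  · intro u v _ _ _
    rw [hG, hG, add_comm v u]; ring
  · intro x y z _ _ _ _
    rw [hG, hG, hG, hG]
    have : x + y + z = x + (y + z) := by ring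
    rw [this]; ring
  · intro t ht u v hu hv huv
    obtain ⟨ht0, ht1⟩ := ht
    have hs0 : (0:ℝ) < u + v := huv.1
    have hs1 : u + v ≤ 1 := le_of_lt huv.2
    have hx : u / (u + v) ∈ Set.Ioo (0:ℝ) 1 := by
      refine ⟨div_pos hu.1 hs0, ?_⟩
      rw [div_lt_one hs0]; linarith [hv.1]
    have h1x : 1 - u / (u + v) = v / (u + v) := by
      field_simp
      ring
    have key : ∀ y ∈ Set.Ioc (0:ℝ) 1,
        f (u / (u + v) * y) + f (v / (u + v) * y) - f y
          = (f (u / (u + v)) + f (v / (u + v))) * y ^ q := by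
      intro y hy
      have := hf _ hx y hy
      rwa [h1x] at this
    have hts : t * (u + v) ∈ Set.Ioc (0:ℝ) 1 := by
      constructor
      · positivity
      · nlinarith
    have hs : u + v ∈ Set.Ioc (0:ℝ) 1 := ⟨hs0, hs1⟩
    have e1 := key _ hts
    have e2 := key _ hs
    have hsne : (u + v) ≠ 0 := ne_of_gt hs0
    have hut : u / (u + v) * (t * (u + v)) = t * u := by field_simp
    have hvt : v / (u + v) * (t * (u + v)) = t * v := by field_simp
    have hu2 : u / (u + v) * (u + v) = u := by field_simp
    have hv2 : v / (u + v) * (u + v) = v := by field_simp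
    rw [hut, hvt] at e1
    rw [hu2, hv2] at e2
    have hpow : (t * (u + v)) ^ q = t ^ q * (u + v) ^ q :=
      Real.mul_rpow (le_of_lt ht0) (le_of_lt hs0)
    rw [hG, hG]
    have : t * u + t * v = t * (u + v) := by ring
    rw [this]
    calc f (t * u) + f (t * v) - f (t * (u + v))
        = (f (u / (u + v)) + f (v / (u + v))) * (t * (u + v)) ^ q := e1
      _ = t ^ q * ((f (u / (u + v)) + f (v / (u + v))) * (u + v) ^ q) := by
          rw [hpow]; ring
      _ = t ^ q * (f u + f v - f (u + v)) := by rw [← e2]
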